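/- Let G be a finite connected balanced bipartite graph with bipartition V = A ∪ B, |A| = |B|, and let w ∈ Δ satisfy w_i > 0 for all i and ∂L/∂v_i(w) = 0 for all i (i.e. w is an interior equilibrium). For η ∈ ℝ define v ∈ ℝ^m by v_i = w_i + η for i ∈ A and v_i = w_i − η for i ∈ B. If v_i ≥ 0 for all i, then v ∈ Δ, and ∂L/∂v_i(v) = 0 for all i; in particular v is a non-unstable equilibrium of F. Hence the set of such points forms a closed line segment of non-unstable equilibria through w. -/

import Mathlib

open Finset

/-- The domain `Δ`. -/
def urnDomain {m : ℕ} (G : SimpleGraph (Fin m)) (c : ℝ) : Set (Fin m → ℝ) :=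
  {v | (∀ i, 0 ≤ v i) ∧ (∑ i, v i) = 1 ∧ ∀ i j, G.Adj i j → c ≤ v i + v j}

/-- `∂L/∂v_i (v) = -1 + (1/N) Σ_{j ∼ i} 1/(v_i + v_j)`. -/
noncomputable def dLyap {m : ℕ} (G : SimpleGraph (Fin m)) [DecidableRel G.Adj] (N : ℕ)
    (i : Fin m) (v : Fin m → ℝ) : ℝ :=
  -1 + (1 / (N : ℝ)) * ∑ j ∈ G.neighborFinset i, 1 / (v i + v j)

/-- Let `G` be a finite connected balanced bipartite graph with bipartition
`A ∪ Aᶜ` and `w ∈ Δ` an interior equilibrium (`w_i > 0` and `∂L/∂v_i(w) = 0` for all `i`).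
For `η ∈ ℝ` let `v_i = w_i + η` for `i ∈ A` and `v_i = w_i - η` for `i ∉ A`. If `v_i ≥ 0` for
all `i`, then `v ∈ Δ` and `∂L/∂v_i(v) = 0` for all `i` — in particular `v` is a non-unstable
equilibrium of `F` — and the set of all such points is a closed segment through `w`. -/
theorem interior_equilibrium_segment
    {m : ℕ} (hm : 2 ≤ m) (G : SimpleGraph (Fin m)) [DecidableRel G.Adj]
    (hconn : G.Connected)
    (A : Finset (Fin m)) (hbip : ∀ i j, G.Adj i j → (i ∈ A ↔ j ∉ A)) (hbal : 2 * A.card = m)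
    (N : ℕ) (hN : N = G.edgeFinset.card)
    (c : ℝ) (hc0 : 0 < c) (hc1 : c < 1 / (N : ℝ))
    (w : Fin m → ℝ) (hwΔ : w ∈ urnDomain G c)
    (hwpos : ∀ i, 0 < w i) (hweq : ∀ i, dLyap G N i w = 0) :
    (∀ η : ℝ, (∀ i, 0 ≤ (if i ∈ A then w i + η else w i - η)) →
      ((fun i => if i ∈ A then w i + η else w i - η) ∈ urnDomain G c ∧
        (∀ i, dLyap G N i (fun i => if i ∈ A then w i + η else w i - η) = 0) ∧
        (∀ i, 0 < (if i ∈ A then w i + η else w i - η) →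
          dLyap G N i (fun i => if i ∈ A then w i + η else w i - η) = 0) ∧
        (∀ i, (if i ∈ A then w i + η else w i - η) = 0 →
          dLyap G N i (fun i => if i ∈ A then w i + η else w i - η) ≤ 0))) ∧
    (∃ a b : Fin m → ℝ, w ∈ segment ℝ a b ∧
      segment ℝ a b = {v : Fin m → ℝ | ∃ η : ℝ,
        (∀ i, v i = if i ∈ A then w i + η else w i - η) ∧ ∀ i, 0 ≤ v i}) := by
  classical
  have hAcard : 1 ≤ A.card := by omega
  have hA : A.Nonempty := Finset.card_pos.mp hAcard
  have hAccard : Aᶜ.card = A.card := by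
    rw [Finset.card_compl, Fintype.card_fin]; omega
  have hAc : Aᶜ.Nonempty := Finset.card_pos.mp (by omega)
  -- edge sums are invariant
  have hedge : ∀ η : ℝ, ∀ i j, G.Adj i j →
      (if i ∈ A then w i + η else w i - η) + (if j ∈ A then w j + η else w j - η)
        = w i + w j := by
    intro η i j hij
    have h := hbip i j hij
    by_cases hi : i ∈ A
    · have hj : j ∉ A := h.mp hi
      simp only [hi, hj, if_true, if_false]; ring
    · have hj : j ∈ A := by
        by_contra hj; exact hi (h.mpr hj)
      simp only [hi, hj, if_true, if_false]; ring
  -- the sum is invariant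
  have hsum : ∀ η : ℝ, ∑ i, (if i ∈ A then w i + η else w i - η) = 1 := by
    intro η
    have hsplit : ∀ f : Fin m → ℝ, ∑ i, f i = ∑ i ∈ A, f i + ∑ i ∈ Aᶜ, f i :=
      fun f => (Finset.sum_add_sum_compl A f).symm
    rw [hsplit]
    rw [Finset.sum_congr rfl (fun i hi => if_pos hi),
        Finset.sum_congr rfl (fun i hi => if_neg (Finset.mem_compl.mp hi))]
    rw [Finset.sum_add_distrib, Finset.sum_sub_distrib, Finset.sum_const, Finset.sum_const,
        hAccard]
    have h1 : ∑ i ∈ A, w i + ∑ i ∈ Aᶜ, w i = 1 := by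
      rw [Finset.sum_add_sum_compl A w]; exact hwΔ.2.1
    simp only [nsmul_eq_mul]
    linarith
  -- dLyap is invariant
  have hdl : ∀ η : ℝ, ∀ i,
      dLyap G N i (fun i => if i ∈ A then w i + η else w i - η) = dLyap G N i w := by
    intro η i
    unfold dLyap
    congr 2
    apply Finset.sum_congr rfl
    intro j hj
    rw [SimpleGraph.mem_neighborFinset] at hj
    simp only
    rw [hedge η i j hj]
  constructor
  · intro η hnn
    refine ⟨⟨hnn, hsum η, ?_⟩, fun i => (hdl η i).trans (hweq i), ?_, ?_⟩
    · intro i j hij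
      simp only
      rw [hedge η i j hij]
      exact hwΔ.2.2 i j hij
    · intro i _; exact (hdl η i).trans (hweq i)
    · intro i _; exact le_of_eq ((hdl η i).trans (hweq i))
  · -- the segment
    set ηlo : ℝ := -(A.inf' hA w) with hηlo
    set ηhi : ℝ := Aᶜ.inf' hAc w with hηhidef
    have hηloneg : ηlo < 0 := by
      obtain ⟨i, hi, hival⟩ := Finset.exists_mem_eq_inf' hA w
      rw [hηlo, hival]; linarith [hwpos i]
    have hηhipos : 0 < ηhi := by
      obtain ⟨i, hi, hival⟩ := Finset.exists_mem_eq_inf' hAc w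
      rw [hηhidef, hival]; exact hwpos i
    set a : Fin m → ℝ := fun i => if i ∈ A then w i + ηlo else w i - ηlo with hadef
    set b : Fin m → ℝ := fun i => if i ∈ A then w i + ηhi else w i - ηhi with hbdef
    have hann : ∀ i, 0 ≤ a i := by
      intro i
      rw [hadef]
      by_cases hi : i ∈ A
      · simp only [hi, if_true]
        have h2 := Finset.inf'_le w hi
        simp only [hηlo]
        linarith
      · simp only [hi, if_false]
        linarith [hwpos i, hηloneg]
    have hbnn : ∀ i, 0 ≤ b i := by
      intro i
      rw [hbdef]
      by_cases hi : i ∈ A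
      · simp only [hi, if_true]
        linarith [hwpos i, hηhipos]
      · simp only [hi, if_false]
        have h2 := Finset.inf'_le w (Finset.mem_compl.mpr hi)
        simp only [hηhidef]
        linarith
    have hset : segment ℝ a b = {v : Fin m → ℝ | ∃ η : ℝ,
        (∀ i, v i = if i ∈ A then w i + η else w i - η) ∧ ∀ i, 0 ≤ v i} := by
      ext v
      constructor
      · rintro ⟨s, t, hs, ht, hst, rfl⟩
        refine ⟨s * ηlo + t * ηhi, fun i => ?_, fun i => ?_⟩
        · simp only [Pi.add_apply, Pi.smul_apply, smul_eq_mul, hadef, hbdef]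
          by_cases hi : i ∈ A
          · simp only [hi, if_true]
            have hs1 : s = 1 - t := by linarith
            rw [hs1]; ring
          · simp only [hi, if_false]
            have hs1 : s = 1 - t := by linarith
            rw [hs1]; ring
        · simp only [Pi.add_apply, Pi.smul_apply, smul_eq_mul]
          have h1 := hann i
          have h2 := hbnn i
          positivity
      · rintro ⟨η, hv, hnn⟩
        have hηlb : ηlo ≤ η := by
          obtain ⟨i, hi, hival⟩ := Finset.exists_mem_eq_inf' hA w
          have h1 := hnn i
          rw [hv i, if_pos hi] at h1
          rw [hηlo, hival]; linarith
        have hηub : η ≤ ηhi := by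
          obtain ⟨i, hi, hival⟩ := Finset.exists_mem_eq_inf' hAc w
          have h1 := hnn i
          rw [hv i, if_neg (Finset.mem_compl.mp hi)] at h1
          rw [hηhidef, hival]; linarith
        have hd : (0:ℝ) < ηhi - ηlo := by linarith
        refine ⟨(ηhi - η) / (ηhi - ηlo), (η - ηlo) / (ηhi - ηlo), div_nonneg (by linarith) hd.le,
          div_nonneg (by linarith) hd.le,
          by field_simp; ring, ?_⟩
        funext i
        simp only [Pi.add_apply, Pi.smul_apply, smul_eq_mul, hadef, hbdef]
        rw [hv i]
        by_cases hi : i ∈ A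
        · simp only [hi, if_true]
          field_simp
          ring
        · simp only [hi, if_false]
          field_simp
          ring
    refine ⟨a, b, ?_, hset⟩
    rw [hset]
    exact ⟨0, fun i => by split_ifs <;> ring, fun i => (hwpos i).le⟩
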